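/- arXiv:1907.07949 — 2 statements merged into one kernel-verified Lean document; each statement's English description precedes it below -/
import Mathlib

section
/- Let V be a finite set, i₀, j₀ ∈ V, and let ℚ_{i₀}^W(du) be the probability measure on {u : V → ℝ, u_{i₀} = 0} with density c_V exp(-(1/2)Σ_{i→j} W_{i,j}(e^{u_j - u_i} - 1))·√(D_{i₀}(W,u)) with respect to Π_{i ≠ i₀} du_i, where D_{i₀}(W,u) = Σ_{T ∈ 𝒯_{i₀}} Π_{(i,j)∈T} W_{i,j} e^{u_j - u_i} over directed spanning trees toward i₀. Assume (as known) that ℚ_{j₀}^W is a probability measure for every j₀. Then ∫ e^{u_{j₀}} ℚ_{i₀}^W(du) = 1. -/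
open Finset MeasureTheory
open scoped ENNReal Classical

variable {V : Type*} [Fintype V] [DecidableEq V]

/-- `T` is a directed spanning tree oriented towards the root `r`: edges are non-loops,
every vertex other than the root has exactly one outgoing edge, the root has none,
and every vertex is connected to the root along directed edges of `T`. -/
def IsDirSpanningTree (T : Finset (V × V)) (r : V) : Prop :=
  (∀ e ∈ T, e.1 ≠ e.2) ∧
  (∀ i : V, i ≠ r → ∃! j : V, (i, j) ∈ T) ∧
  (∀ j : V, (r, j) ∉ T) ∧
  (∀ i : V, ∃ (n : ℕ) (f : ℕ → V), f 0 = i ∧ f n = r ∧ ∀ k < n, (f k, f (k + 1)) ∈ T)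

/-- `D_{i₀}(W,u) = Σ_{T ∈ 𝒯_{i₀}} Π_{(i,j) ∈ T} W_{i,j} e^{u_j - u_i}`. -/
noncomputable def treePoly (W : V → V → ℝ) (r : V) (u : V → ℝ) : ℝ :=
  ∑ T ∈ Finset.univ.filter (fun T : Finset (V × V) => IsDirSpanningTree T r),
    ∏ e ∈ T, W e.1 e.2 * Real.exp (u e.2 - u e.1)

/-- Extension of coordinates `x` on `{i ≠ i₀}` to a function `u : V → ℝ` with `u i₀ = 0`. -/
noncomputable def extUp (i₀ : V) (x : {i : V // i ≠ i₀} → ℝ) : V → ℝ :=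
  fun i => if h : i = i₀ then 0 else x ⟨i, h⟩

/-- Density of `ℚ_{i₀}^W` with respect to Lebesgue measure `Π_{i ≠ i₀} du_i`:
`c_V exp(-(1/2) Σ_{i→j} W_{i,j}(e^{u_j-u_i}-1)) √(D_{i₀}(W,u))`. -/
noncomputable def QDensity (W : V → V → ℝ) (i₀ : V) (x : {i : V // i ≠ i₀} → ℝ) : ℝ :=
  ((Real.sqrt (2 * Real.pi)) ^ (Fintype.card V - 1))⁻¹ *
  Real.exp (-(1/2) * ∑ p ∈ Finset.univ.filter (fun p : V × V => p.1 ≠ p.2),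
      W p.1 p.2 * (Real.exp (extUp i₀ x p.2 - extUp i₀ x p.1) - 1)) *
  Real.sqrt (treePoly W i₀ (extUp i₀ x))

noncomputable def tnext (T : Finset (V × V)) : V → V :=
  fun i => if h : ∃ j, (i, j) ∈ T then h.choose else i

lemma tnext_mem {T : Finset (V × V)} {i : V} (h : ∃ j, (i, j) ∈ T) : (i, tnext T i) ∈ T := by
  rw [tnext, dif_pos h]; exact h.choose_spec

variable {T : Finset (V × V)} {r : V}

lemma mem_iff_tnext (hT : IsDirSpanningTree T r) {i j : V} :
    (i, j) ∈ T ↔ i ≠ r ∧ j = tnext T i := by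
  constructor
  · intro hij
    have hir : i ≠ r := by rintro rfl; exact hT.2.2.1 j hij
    obtain ⟨b, hb, hu⟩ := hT.2.1 i hir
    exact ⟨hir, (hu j hij).trans (hu _ (tnext_mem ⟨j, hij⟩)).symm⟩
  · rintro ⟨hir, rfl⟩
    obtain ⟨b, hb, -⟩ := hT.2.1 i hir
    exact tnext_mem ⟨b, hb⟩

lemma tnext_reach (hT : IsDirSpanningTree T r) (i : V) : ∃ n, (tnext T)^[n] i = r := by
  obtain ⟨n, f, h0, hn, hstep⟩ := hT.2.2.2 i
  have key : ∀ k, k ≤ n → (tnext T)^[k] i = f k := by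
    intro k hk
    induction k with
    | zero => simpa using h0.symm
    | succ k ih =>
      have hk' : k < n := hk
      rw [Function.iterate_succ_apply', ih (le_of_lt hk')]
      exact ((mem_iff_tnext hT).1 (hstep k hk')).2.symm
  exact ⟨n, (key n le_rfl).trans hn⟩

noncomputable def pathLen (T : Finset (V × V)) (r s : V) : ℕ :=
  if h : ∃ n, (tnext T)^[n] s = r then Nat.find h else 0

noncomputable def pathEdges (T : Finset (V × V)) (r s : V) : Finset (V × V) :=
  (Finset.range (pathLen T r s)).image
    (fun k => ((tnext T)^[k] s, (tnext T)^[k + 1] s))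

noncomputable def flipTree (T : Finset (V × V)) (r s : V) : Finset (V × V) :=
  (T \ pathEdges T r s) ∪ (pathEdges T r s).image Prod.swap

lemma pathLen_spec (hT : IsDirSpanningTree T r) (s : V) :
    (tnext T)^[pathLen T r s] s = r := by
  rw [pathLen, dif_pos (tnext_reach hT s)]
  exact Nat.find_spec (tnext_reach hT s)

lemma pathLen_min (hT : IsDirSpanningTree T r) {s : V} {k : ℕ} (hk : k < pathLen T r s) :
    (tnext T)^[k] s ≠ r := by
  rw [pathLen, dif_pos (tnext_reach hT s)] at hk
  exact Nat.find_min (tnext_reach hT s) hk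

lemma path_inj (hT : IsDirSpanningTree T r) {s : V} {a b : ℕ}
    (ha : a ≤ pathLen T r s) (hb : b ≤ pathLen T r s)
    (hab : (tnext T)^[a] s = (tnext T)^[b] s) : a = b := by
  set m := pathLen T r s with hm
  have key : ∀ a b : ℕ, a ≤ m → b ≤ m → (tnext T)^[a] s = (tnext T)^[b] s → b ≤ a := by
    intro a b ha hb hab
    by_contra hlt
    push_neg at hlt
    have h1 : (tnext T)^[m - b + a] s = r := by
      have : (tnext T)^[m - b + b] s = r := by
        rw [Nat.sub_add_cancel hb]; exact pathLen_spec hT s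
      rw [Function.iterate_add_apply] at this ⊢
      rw [hab]; exact this
    exact pathLen_min hT (by omega) h1
  exact le_antisymm (key b a hb ha hab.symm) (key a b ha hb hab)

lemma mem_pathEdges {s : V} {e : V × V} :
    e ∈ pathEdges T r s ↔
      ∃ k, k < pathLen T r s ∧ (tnext T)^[k] s = e.1 ∧ (tnext T)^[k + 1] s = e.2 := by
  simp only [pathEdges, Finset.mem_image, Finset.mem_range, Prod.ext_iff]

lemma pathEdges_subset (hT : IsDirSpanningTree T r) (s : V) : pathEdges T r s ⊆ T := by
  intro e he
  obtain ⟨k, hk, h1, h2⟩ := mem_pathEdges.1 he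
  have : e = ((tnext T)^[k] s, (tnext T)^[k+1] s) := by
    rw [Prod.ext_iff]; exact ⟨h1.symm, h2.symm⟩
  rw [this]
  rw [Function.iterate_succ_apply']
  exact (mem_iff_tnext hT).2 ⟨pathLen_min hT hk, rfl⟩

lemma swap_pathEdges_not_mem (hT : IsDirSpanningTree T r) {s : V} {e : V × V}
    (he : e ∈ (pathEdges T r s).image Prod.swap) : e ∉ T := by
  obtain ⟨e', he', rfl⟩ := Finset.mem_image.1 he
  obtain ⟨k, hk, h1, h2⟩ := mem_pathEdges.1 he'
  intro hmem
  rw [Prod.swap] at hmem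
  have h3 := (mem_iff_tnext hT).1 hmem
  have hne : (tnext T)^[k+1] s ≠ r := by rw [h2]; exact h3.1
  have hk1 : k + 1 < pathLen T r s := by
    rcases Nat.lt_or_ge (k + 1) (pathLen T r s) with h | h
    · exact h
    · exfalso
      have h' : k + 1 = pathLen T r s := le_antisymm (by omega) h
      exact hne (by rw [h']; exact pathLen_spec hT s)
  have : (tnext T)^[k] s = (tnext T)^[k+2] s := by
    have : e'.1 = tnext T e'.2 := h3.2
    rw [← h1, ← h2] at this
    rw [this, ← Function.iterate_succ_apply' (tnext T) (k+1)]
  have := path_inj hT (by omega) (by omega) this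
  omega

lemma rev_edge_mem_flip (hT : IsDirSpanningTree T r) {s : V} {k : ℕ}
    (h1 : 1 ≤ k) (hk : k ≤ pathLen T r s) :
    ((tnext T)^[k] s, (tnext T)^[k - 1] s) ∈ flipTree T r s := by
  apply Finset.mem_union_right
  apply Finset.mem_image.2
  refine ⟨((tnext T)^[k - 1] s, (tnext T)^[k] s), ?_, rfl⟩
  apply mem_pathEdges.2
  exact ⟨k - 1, by omega, rfl, by rw [show k - 1 + 1 = k from by omega]⟩

lemma flip_isSpanning (hT : IsDirSpanningTree T r) (s : V) :
    IsDirSpanningTree (flipTree T r s) s := by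
  set m := pathLen T r s with hm
  have vmr : (tnext T)^[m] s = r := pathLen_spec hT s
  refine ⟨?_, ?_, ?_, ?_⟩
  · intro e he
    rcases Finset.mem_union.1 he with h | h
    · exact hT.1 e (Finset.mem_sdiff.1 h).1
    · obtain ⟨e', he', rfl⟩ := Finset.mem_image.1 h
      exact (hT.1 e' (pathEdges_subset hT s he')).symm
  · intro a ha
    by_cases hp : ∃ k, k ≤ m ∧ (tnext T)^[k] s = a
    · obtain ⟨k, hk, rfl⟩ := hp
      have hk0 : 1 ≤ k := by
        rcases Nat.eq_zero_or_pos k with h | h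
        · exfalso; apply ha; rw [h]; exact Function.iterate_zero_apply _ _
        · exact h
      refine ⟨(tnext T)^[k - 1] s, rev_edge_mem_flip hT hk0 hk, ?_⟩
      intro b hb
      rcases Finset.mem_union.1 hb with h | h
      · exfalso
        obtain ⟨hmem, hnp⟩ := Finset.mem_sdiff.1 h
        have h2 := (mem_iff_tnext hT).1 hmem
        have hkm : k < m := by
          rcases Nat.lt_or_ge k m with h' | h'
          · exact h'
          · exact absurd (by rw [show k = m from by omega]; exact vmr) h2.1
        apply hnp
        apply mem_pathEdges.2
        exact ⟨k, hkm, rfl, by rw [Function.iterate_succ_apply']; exact h2.2.symm⟩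
      · obtain ⟨e', he', heq⟩ := Finset.mem_image.1 h
        obtain ⟨l, hl, h1, h2⟩ := mem_pathEdges.1 he'
        have hb1 : e'.2 = (tnext T)^[k] s := congrArg Prod.fst heq
        have hb2 : e'.1 = b := congrArg Prod.snd heq
        have hlk : l + 1 = k := path_inj hT (by omega) hk (by rw [h2, hb1])
        rw [← hb2, ← h1, show k - 1 = l from by omega]
    · have har : a ≠ r := fun h => hp ⟨m, le_rfl, by rw [vmr, h]⟩
      refine ⟨tnext T a, ?_, ?_⟩
      · apply Finset.mem_union_left
        apply Finset.mem_sdiff.2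
        refine ⟨(mem_iff_tnext hT).2 ⟨har, rfl⟩, ?_⟩
        intro hmem
        obtain ⟨l, hl, h1, h2⟩ := mem_pathEdges.1 hmem
        exact hp ⟨l, le_of_lt hl, h1⟩
      · intro b hb
        rcases Finset.mem_union.1 hb with h | h
        · exact ((mem_iff_tnext hT).1 (Finset.mem_sdiff.1 h).1).2
        · exfalso
          obtain ⟨e', he', heq⟩ := Finset.mem_image.1 h
          obtain ⟨l, hl, h1, h2⟩ := mem_pathEdges.1 he'
          exact hp ⟨l + 1, by omega, by rw [h2]; exact congrArg Prod.fst heq⟩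
  · intro b hb
    rcases Finset.mem_union.1 hb with h | h
    · obtain ⟨hmem, hnp⟩ := Finset.mem_sdiff.1 h
      have h2 := (mem_iff_tnext hT).1 hmem
      have hm0 : 0 < m := by
        rcases Nat.eq_zero_or_pos m with h' | h'
        · exact absurd (by rw [← vmr, h']; exact (Function.iterate_zero_apply _ _).symm : s = r) h2.1
        · exact h'
      apply hnp
      apply mem_pathEdges.2
      exact ⟨0, hm0, rfl, by rw [Function.iterate_one]; exact h2.2.symm⟩
    · obtain ⟨e', he', heq⟩ := Finset.mem_image.1 h
      obtain ⟨l, hl, h1, h2⟩ := mem_pathEdges.1 he'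
      have heq0 : (tnext T)^[l + 1] s = (tnext T)^[0] s := by
        rw [h2]; exact congrArg Prod.fst heq
      have := path_inj hT (by omega) (by omega) heq0
      omega
  · intro i
    have hex : ∃ k, ∃ l, l ≤ m ∧ (tnext T)^[l] s = (tnext T)^[k] i := by
      obtain ⟨n, hn⟩ := tnext_reach hT i
      exact ⟨n, m, le_rfl, by rw [vmr, hn]⟩
    set t := Nat.find hex with ht
    obtain ⟨l, hl, hvl⟩ := Nat.find_spec hex
    have hmin : ∀ k, k < t → ∀ l', l' ≤ m → (tnext T)^[l'] s ≠ (tnext T)^[k] i := by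
      intro k hk l' hl' heq
      exact Nat.find_min hex hk ⟨l', hl', heq⟩
    refine ⟨t + l, fun k => if k ≤ t then (tnext T)^[k] i else (tnext T)^[l - (k - t)] s,
      by simp, ?_, ?_⟩
    · show (if t + l ≤ t then (tnext T)^[t + l] i else (tnext T)^[l - (t + l - t)] s) = s
      by_cases hc : t + l ≤ t
      · rw [if_pos hc, show t + l = t from by omega, ← hvl, show l = 0 from by omega]
        exact Function.iterate_zero_apply _ _
      · rw [if_neg hc, show l - (t + l - t) = 0 from by omega]
        exact Function.iterate_zero_apply _ _
    · intro k hk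
      show ((if k ≤ t then (tnext T)^[k] i else (tnext T)^[l - (k - t)] s),
        (if k + 1 ≤ t then (tnext T)^[k + 1] i else (tnext T)^[l - (k + 1 - t)] s)) ∈
          flipTree T r s
      by_cases hc : k + 1 ≤ t
      · rw [if_pos (show k ≤ t from by omega), if_pos hc, Function.iterate_succ_apply']
        apply Finset.mem_union_left
        apply Finset.mem_sdiff.2
        constructor
        · refine (mem_iff_tnext hT).2 ⟨?_, rfl⟩
          intro hr
          exact hmin k (by omega) m le_rfl (by rw [vmr, hr])
        · intro hmem
          obtain ⟨l', hl', h1, h2⟩ := mem_pathEdges.1 hmem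
          exact hmin k (by omega) l' (le_of_lt hl') h1
      · have hfk : (if k ≤ t then (tnext T)^[k] i else (tnext T)^[l - (k - t)] s)
            = (tnext T)^[l - (k - t)] s := by
          by_cases h' : k ≤ t
          · rw [if_pos h', show k = t from by omega, ← hvl,
              show l - (t - t) = l from by omega]
          · rw [if_neg h']
        have hfk1 : (if k + 1 ≤ t then (tnext T)^[k + 1] i else (tnext T)^[l - (k + 1 - t)] s)
            = (tnext T)^[l - (k - t) - 1] s := by
          rw [if_neg hc, show l - (k + 1 - t) = l - (k - t) - 1 from by omega]
        rw [hfk, hfk1]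
        exact rev_edge_mem_flip hT (by omega) (by omega)

lemma tnext_flip (hT : IsDirSpanningTree T r) {s : V} {k : ℕ}
    (h1 : 1 ≤ k) (hk : k ≤ pathLen T r s) :
    tnext (flipTree T r s) ((tnext T)^[k] s) = (tnext T)^[k - 1] s :=
  ((mem_iff_tnext (flip_isSpanning hT s)).1 (rev_edge_mem_flip hT h1 hk)).2.symm

lemma disj_flip (hT : IsDirSpanningTree T r) (s : V) :
    Disjoint (T \ pathEdges T r s) ((pathEdges T r s).image Prod.swap) := by
  rw [Finset.disjoint_right]
  intro e he hmem
  exact swap_pathEdges_not_mem hT he (Finset.mem_sdiff.1 hmem).1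

lemma pathLen_flip (hT : IsDirSpanningTree T r) (s : V) :
    pathLen (flipTree T r s) s r = pathLen T r s ∧
    ∀ j, j ≤ pathLen T r s →
      (tnext (flipTree T r s))^[j] r = (tnext T)^[pathLen T r s - j] s := by
  set m := pathLen T r s with hm
  have vmr : (tnext T)^[m] s = r := pathLen_spec hT s
  have step1 : ∀ j, j ≤ m → (tnext (flipTree T r s))^[j] r = (tnext T)^[m - j] s := by
    intro j hj
    induction j with
    | zero => simpa using vmr.symm
    | succ j ih =>
      rw [Function.iterate_succ_apply', ih (by omega),
        tnext_flip hT (by omega) (by omega), show m - j - 1 = m - (j + 1) from by omega]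
  refine ⟨?_, step1⟩
  have hΦ := flip_isSpanning hT s
  have hexΦ : ∃ n, (tnext (flipTree T r s))^[n] r = s := tnext_reach hΦ r
  have hms : (tnext (flipTree T r s))^[m] r = s := by
    rw [step1 m le_rfl, Nat.sub_self]
    exact Function.iterate_zero_apply _ _
  have hle : pathLen (flipTree T r s) s r ≤ m := by
    rw [pathLen, dif_pos hexΦ]
    exact Nat.find_le hms
  rcases Nat.lt_or_ge (pathLen (flipTree T r s) s r) m with hlt | hge
  · exfalso
    have h1 : (tnext (flipTree T r s))^[pathLen (flipTree T r s) s r] r = s :=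
      pathLen_spec hΦ r
    rw [step1 _ (le_of_lt hlt)] at h1
    have h0 : (tnext T)^[m - pathLen (flipTree T r s) s r] s = (tnext T)^[0] s := by
      rw [h1]; exact (Function.iterate_zero_apply _ _).symm
    have := path_inj hT (by omega) (by omega) h0
    omega
  · omega

lemma flipTree_flipTree (hT : IsDirSpanningTree T r) (s : V) :
    flipTree (flipTree T r s) s r = T := by
  set m := pathLen T r s with hm
  obtain ⟨hmm, hvv⟩ := pathLen_flip hT s
  have hPP : pathEdges (flipTree T r s) s r = (pathEdges T r s).image Prod.swap := by
    ext e
    rw [mem_pathEdges, Finset.mem_image]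
    constructor
    · rintro ⟨j, hj, h1, h2⟩
      rw [hmm] at hj
      rw [hvv j (by omega)] at h1
      rw [hvv (j + 1) (by omega)] at h2
      refine ⟨(e.2, e.1), ?_, by simp⟩
      apply mem_pathEdges.2
      refine ⟨m - j - 1, by omega, ?_, ?_⟩
      · rw [show m - (j + 1) = m - j - 1 from by omega] at h2; exact h2
      · rw [show m - j - 1 + 1 = m - j from by omega]; exact h1
    · rintro ⟨e', he', rfl⟩
      obtain ⟨k, hk, h1, h2⟩ := mem_pathEdges.1 he'
      refine ⟨m - k - 1, by rw [hmm]; omega, ?_, ?_⟩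
      · rw [hvv (m - k - 1) (by omega), show m - (m - k - 1) = k + 1 from by omega]
        exact h2
      · rw [hvv (m - k - 1 + 1) (by omega), show m - (m - k - 1 + 1) = k from by omega]
        exact h1
  rw [flipTree, hPP]
  have himg : ((pathEdges T r s).image Prod.swap).image Prod.swap = pathEdges T r s := by
    rw [Finset.image_image]
    simp
  rw [himg]
  have hsd : flipTree T r s \ (pathEdges T r s).image Prod.swap = T \ pathEdges T r s := by
    rw [flipTree, Finset.union_sdiff_cancel_right (disj_flip hT s)]
  rw [hsd, Finset.sdiff_union_of_subset (pathEdges_subset hT s)]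

lemma prod_flip {M : Type*} [CommMonoid M] (hT : IsDirSpanningTree T r) (s : V)
    (w : V → V → M) (hw : ∀ i j, w i j = w j i) :
    ∏ e ∈ flipTree T r s, w e.1 e.2 = ∏ e ∈ T, w e.1 e.2 := by
  rw [flipTree, Finset.prod_union (disj_flip hT s)]
  have h1 : ∏ e ∈ (pathEdges T r s).image Prod.swap, w e.1 e.2
      = ∏ e ∈ pathEdges T r s, w e.1 e.2 := by
    rw [Finset.prod_image (fun a _ b _ h => Prod.swap_injective h)]
    exact Finset.prod_congr rfl fun e _ => hw e.2 e.1
  rw [h1, Finset.prod_sdiff (pathEdges_subset hT s)]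

lemma treeSum_swap {M : Type*} [CommSemiring M] (w : V → V → M) (hw : ∀ i j, w i j = w j i)
    (r s : V) :
    ∑ T ∈ Finset.univ.filter (fun T : Finset (V × V) => IsDirSpanningTree T r),
        ∏ e ∈ T, w e.1 e.2
      = ∑ T ∈ Finset.univ.filter (fun T : Finset (V × V) => IsDirSpanningTree T s),
        ∏ e ∈ T, w e.1 e.2 := by
  refine Finset.sum_bij' (fun T _ => flipTree T r s) (fun T _ => flipTree T s r) ?_ ?_ ?_ ?_ ?_
  · intro T hT
    simp only [Finset.mem_filter, Finset.mem_univ, true_and] at hT ⊢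
    exact flip_isSpanning hT s
  · intro T hT
    simp only [Finset.mem_filter, Finset.mem_univ, true_and] at hT ⊢
    exact flip_isSpanning hT r
  · intro T hT
    simp only [Finset.mem_filter, Finset.mem_univ, true_and] at hT
    exact flipTree_flipTree hT s
  · intro T hT
    simp only [Finset.mem_filter, Finset.mem_univ, true_and] at hT
    exact flipTree_flipTree hT r
  · intro T hT
    simp only [Finset.mem_filter, Finset.mem_univ, true_and] at hT
    exact (prod_flip hT s w hw).symm

lemma sum_fst (hT : IsDirSpanningTree T r) (u : V → ℝ) :
    ∑ e ∈ T, u e.1 = ∑ i ∈ Finset.univ.erase r, u i := by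
  refine Finset.sum_bij' (fun e _ => e.1) (fun i _ => (i, tnext T i)) ?_ ?_ ?_ ?_ ?_
  · intro e he
    obtain ⟨a, b⟩ := e
    exact Finset.mem_erase.2 ⟨((mem_iff_tnext hT).1 he).1, Finset.mem_univ _⟩
  · intro i hi
    exact (mem_iff_tnext hT).2 ⟨(Finset.mem_erase.1 hi).1, rfl⟩
  · intro e he
    obtain ⟨a, b⟩ := e
    have := ((mem_iff_tnext hT).1 he).2
    simp [this.symm]
  · intro i hi
    rfl
  · intro e he
    rfl

lemma treePoly_factor (W : V → V → ℝ) (r : V) (u : V → ℝ) :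
    treePoly W r u = Real.exp (-2 * ∑ i ∈ Finset.univ.erase r, u i) *
      ∑ T ∈ Finset.univ.filter (fun T : Finset (V × V) => IsDirSpanningTree T r),
        ∏ e ∈ T, (W e.1 e.2 * Real.exp (u e.1 + u e.2)) := by
  rw [treePoly, Finset.mul_sum]
  refine Finset.sum_congr rfl fun T hT => ?_
  have hT' : IsDirSpanningTree T r := (Finset.mem_filter.1 hT).2
  have key : ∀ e : V × V, W e.1 e.2 * Real.exp (u e.2 - u e.1)
      = (W e.1 e.2 * Real.exp (u e.1 + u e.2)) * Real.exp (-2 * u e.1) := by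
    intro e
    rw [mul_assoc, ← Real.exp_add]
    ring_nf
  calc ∏ e ∈ T, W e.1 e.2 * Real.exp (u e.2 - u e.1)
      = ∏ e ∈ T, ((W e.1 e.2 * Real.exp (u e.1 + u e.2)) * Real.exp (-2 * u e.1)) :=
        Finset.prod_congr rfl fun e _ => key e
    _ = (∏ e ∈ T, (W e.1 e.2 * Real.exp (u e.1 + u e.2))) * ∏ e ∈ T, Real.exp (-2 * u e.1) :=
        Finset.prod_mul_distrib
    _ = Real.exp (-2 * ∑ i ∈ Finset.univ.erase r, u i) *
        ∏ e ∈ T, (W e.1 e.2 * Real.exp (u e.1 + u e.2)) := by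
        rw [← Real.exp_sum]
        have : ∑ e ∈ T, -2 * u e.1 = -2 * ∑ i ∈ Finset.univ.erase r, u i := by
          rw [← Finset.mul_sum, sum_fst hT' u]
        rw [this, mul_comm]

lemma treePoly_root_shift (W : V → V → ℝ) (hsym : ∀ i j, W i j = W j i) (r s : V)
    (u : V → ℝ) :
    treePoly W s u = Real.exp (2 * (u s - u r)) * treePoly W r u := by
  rw [treePoly_factor W s u, treePoly_factor W r u,
    treeSum_swap (fun i j => W i j * Real.exp (u i + u j))
      (fun i j => by show W i j * Real.exp (u i + u j) = W j i * Real.exp (u j + u i); rw [hsym i j, add_comm (u i)]) s r]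
  rw [← mul_assoc, ← Real.exp_add]
  congr 2
  have h1 : ∑ i ∈ Finset.univ.erase s, u i = (∑ i, u i) - u s := by
    rw [← Finset.add_sum_erase _ u (Finset.mem_univ s)]; ring
  have h2 : ∑ i ∈ Finset.univ.erase r, u i = (∑ i, u i) - u r := by
    rw [← Finset.add_sum_erase _ u (Finset.mem_univ r)]; ring
  rw [h1, h2]; ring

lemma treePoly_shift (W : V → V → ℝ) (r : V) (u : V → ℝ) (c : ℝ) :
    treePoly W r (fun i => u i - c) = treePoly W r u := by
  rw [treePoly, treePoly]
  refine Finset.sum_congr rfl fun T _ => Finset.prod_congr rfl fun e _ => ?_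
  congr 1
  ring_nf

section Shear

variable {i₀ j₀ : V}

noncomputable def shear (h : i₀ ≠ j₀) :
    ({i : V // i ≠ j₀} → ℝ) →ₗ[ℝ] ({i : V // i ≠ j₀} → ℝ) where
  toFun y := fun i => (if i.1 = i₀ then 0 else y i) - y ⟨i₀, h⟩
  map_add' y z := by
    funext i; by_cases hi : i.1 = i₀ <;> simp [hi] <;> ring
  map_smul' c y := by
    funext i; by_cases hi : i.1 = i₀ <;> simp [hi] <;> ring

lemma shear_invol (h : i₀ ≠ j₀) (y : {i : V // i ≠ j₀} → ℝ) : shear h (shear h y) = y := by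
  funext i
  rcases i with ⟨iv, hiv⟩
  by_cases hi : iv = i₀
  · subst hi; simp [shear]
  · simp [shear, hi]

lemma shear_det_abs (h : i₀ ≠ j₀) : |LinearMap.det (shear h)| = 1 := by
  have hcomp : (shear h).comp (shear h) = LinearMap.id :=
    LinearMap.ext fun y => shear_invol h y
  have hsq : LinearMap.det (shear h) * LinearMap.det (shear h) = 1 := by
    rw [← LinearMap.det_comp, hcomp, LinearMap.det_id]
  rcases mul_self_eq_one_iff.1 hsq with h1 | h1 <;> rw [h1] <;> norm_num

lemma shear_measurable (h : i₀ ≠ j₀) : Measurable (shear h) :=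
  (LinearMap.continuous_of_finiteDimensional (shear h)).measurable

lemma shear_measurePreserving (h : i₀ ≠ j₀) :
    MeasurePreserving (shear h) (volume : Measure ({i : V // i ≠ j₀} → ℝ)) volume := by
  have hdet : LinearMap.det (shear h) ≠ 0 := by
    intro h0
    have := shear_det_abs h
    rw [h0] at this
    norm_num at this
  refine ⟨shear_measurable h, ?_⟩
  rw [Real.map_linearMap_volume_pi_eq_smul_volume_pi hdet]
  have habs : |(LinearMap.det (shear h))⁻¹| = 1 := by
    rw [abs_inv, shear_det_abs h]; norm_num
  rw [habs]
  simp

noncomputable def shearEquiv (h : i₀ ≠ j₀) :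
    ({i : V // i ≠ j₀} → ℝ) ≃ᵐ ({i : V // i ≠ j₀} → ℝ) where
  toFun := shear h
  invFun := shear h
  left_inv := shear_invol h
  right_inv := shear_invol h
  measurable_toFun := shear_measurable h
  measurable_invFun := shear_measurable h

noncomputable def idxEquiv (h : i₀ ≠ j₀) : {i : V // i ≠ i₀} ≃ {i : V // i ≠ j₀} :=
  Equiv.subtypeEquiv (Equiv.swap i₀ j₀) (fun a => by
    rw [not_iff_not, Equiv.swap_apply_eq_iff, Equiv.swap_apply_right])

noncomputable def relabel (h : i₀ ≠ j₀) :
    ({i : V // i ≠ i₀} → ℝ) ≃ᵐ ({i : V // i ≠ j₀} → ℝ) :=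
  MeasurableEquiv.piCongrLeft (fun _ => ℝ) (idxEquiv h)

lemma relabel_apply (h : i₀ ≠ j₀) (x : {i : V // i ≠ i₀} → ℝ) (i : {i : V // i ≠ j₀}) :
    relabel h x i = x ((idxEquiv h).symm i) := by
  conv_lhs => rw [← (idxEquiv h).apply_symm_apply i]
  exact Equiv.piCongrLeft_apply_apply (fun _ => ℝ) (idxEquiv h) x ((idxEquiv h).symm i)

noncomputable def shiftMap (h : i₀ ≠ j₀) (x : {i : V // i ≠ i₀} → ℝ) :
    {i : V // i ≠ j₀} → ℝ :=
  fun i => extUp i₀ x i.1 - extUp i₀ x j₀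

lemma extUp_self (i₀ : V) (x : {i : V // i ≠ i₀} → ℝ) : extUp i₀ x i₀ = 0 := by
  simp [extUp]

lemma extUp_ne (i₀ : V) (x : {i : V // i ≠ i₀} → ℝ) {i : V} (hi : i ≠ i₀) :
    extUp i₀ x i = x ⟨i, hi⟩ := by
  simp [extUp, hi]

lemma idxEquiv_symm_coe (h : i₀ ≠ j₀) (i : {i : V // i ≠ j₀}) :
    (((idxEquiv h).symm i) : V) = Equiv.swap i₀ j₀ i.1 := by
  simp [idxEquiv, Equiv.subtypeEquiv_symm, Equiv.symm_swap]

lemma shiftMap_eq (h : i₀ ≠ j₀) :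
    shiftMap h = (shearEquiv h) ∘ (relabel h) := by
  funext x i
  show extUp i₀ x i.1 - extUp i₀ x j₀
      = (if i.1 = i₀ then 0 else relabel h x i) - relabel h x ⟨i₀, h⟩
  have hterm : relabel h x ⟨i₀, h⟩ = extUp i₀ x j₀ := by
    rw [relabel_apply, extUp_ne i₀ x (Ne.symm h)]
    apply congrArg x
    apply Subtype.ext
    rw [idxEquiv_symm_coe]
    exact Equiv.swap_apply_left i₀ j₀
  by_cases hi : i.1 = i₀
  · rw [if_pos hi, hterm, hi, extUp_self]
  · rw [if_neg hi, hterm, relabel_apply, extUp_ne i₀ x hi]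
    have : (⟨i.1, hi⟩ : {i : V // i ≠ i₀}) = (idxEquiv h).symm i := by
      apply Subtype.ext
      rw [idxEquiv_symm_coe]
      exact (Equiv.swap_apply_of_ne_of_ne hi i.2).symm
    rw [this]

lemma shiftMap_measurePreserving (h : i₀ ≠ j₀) :
    MeasurePreserving (shiftMap h)
      (volume : Measure ({i : V // i ≠ i₀} → ℝ))
      (volume : Measure ({i : V // i ≠ j₀} → ℝ)) := by
  rw [shiftMap_eq h]
  exact (shear_measurePreserving h).comp
    (volume_measurePreserving_piCongrLeft (fun _ => ℝ) (idxEquiv h))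

lemma shiftMap_measurableEmbedding (h : i₀ ≠ j₀) :
    MeasurableEmbedding (shiftMap h) := by
  rw [shiftMap_eq h]
  exact ((relabel h).trans (shearEquiv h)).measurableEmbedding

end Shear

lemma key_pointwise (W : V → V → ℝ) (hsym : ∀ i j, W i j = W j i) {i₀ j₀ : V}
    (h : i₀ ≠ j₀) (x : {i : V // i ≠ i₀} → ℝ) :
    Real.exp (extUp i₀ x j₀) * QDensity W i₀ x = QDensity W j₀ (shiftMap h x) := by
  have hext : extUp j₀ (shiftMap h x) = fun i => extUp i₀ x i - extUp i₀ x j₀ := by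
    funext i
    by_cases hi : i = j₀
    · subst hi; rw [extUp_self]; ring
    · rw [extUp_ne j₀ _ hi]; rfl
  rw [QDensity, QDensity, hext]
  set u := extUp i₀ x with hu
  have hui : u i₀ = 0 := extUp_self i₀ x
  have htp : treePoly W j₀ (fun i => u i - u j₀) = Real.exp (u j₀) ^ 2 * treePoly W i₀ u := by
    rw [treePoly_shift, treePoly_root_shift W hsym i₀ j₀ u, hui, sub_zero,
      show (2 : ℝ) * u j₀ = u j₀ + u j₀ from by ring, Real.exp_add, sq]
  have hsqrt : Real.sqrt (Real.exp (u j₀) ^ 2 * treePoly W i₀ u)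
      = Real.exp (u j₀) * Real.sqrt (treePoly W i₀ u) := by
    rw [Real.sqrt_mul (sq_nonneg _), Real.sqrt_sq (Real.exp_pos _).le]
  have hsum : ∑ p ∈ Finset.univ.filter (fun p : V × V => p.1 ≠ p.2),
        W p.1 p.2 * (Real.exp ((u p.2 - u j₀) - (u p.1 - u j₀)) - 1)
      = ∑ p ∈ Finset.univ.filter (fun p : V × V => p.1 ≠ p.2),
        W p.1 p.2 * (Real.exp (u p.2 - u p.1) - 1) :=
    Finset.sum_congr rfl fun p _ => by ring_nf
  rw [htp, hsqrt, hsum]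
  ring

theorem stmt_14 (W : V → V → ℝ) (hsym : ∀ i j, W i j = W j i) (hW : ∀ i j, 0 ≤ W i j)
    (i₀ j₀ : V)
    (hprob : ∀ j₁ : V, ∫ x : {i : V // i ≠ j₁} → ℝ, QDensity W j₁ x = 1) :
    ∫ x : {i : V // i ≠ i₀} → ℝ, Real.exp (extUp i₀ x j₀) * QDensity W i₀ x = 1 := by
  by_cases h : i₀ = j₀
  · subst h
    have heq : (fun x : {i : V // i ≠ i₀} → ℝ =>
        Real.exp (extUp i₀ x i₀) * QDensity W i₀ x) = fun x => QDensity W i₀ x := by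
      funext x
      rw [extUp_self, Real.exp_zero, one_mul]
    rw [heq]
    exact hprob i₀
  · have heq : (fun x : {i : V // i ≠ i₀} → ℝ =>
        Real.exp (extUp i₀ x j₀) * QDensity W i₀ x)
        = fun x => QDensity W j₀ (shiftMap h x) := by
      funext x
      exact key_pointwise W hsym h x
    rw [heq,
      (shiftMap_measurePreserving h).integral_comp (shiftMap_measurableEmbedding h)
        (QDensity W j₀)]
    exact hprob j₀
end

section
/- Let V be finite, let ℚ = ℚ_{i₀}^W be the measure with density proportional to exp(-(1/2)Σ_{i→j}W_{i,j}(e^{u_j-u_i}-1))√D(W,u) on {u_{i₀}=0}, let v : V → ℝ with v(i₀)=0, and γ ∈ ℝ. Define ℚ^γ as the law of u - γv under ℚ. Then ℚ ≪ ℚ^γ with Radon–Nikodym derivative (dℚ/dℚ^γ)(u) = exp((1/2)Σ_{i→j} W_{i,j}e^{u_j-u_i}(e^{γ(v_j-v_i)} - 1))·√(D(W,u)/D(W,u+γv)). -/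
open Finset MeasureTheory
open scoped ENNReal Classical

variable {V : Type*} [Fintype V] [DecidableEq V]

/-- The mixing measure `ℚ_{i₀}^W` realized on the coordinates `(u_i)_{i ≠ i₀}`. -/
noncomputable def Qmeasure (W : V → V → ℝ) (i₀ : V) :
    Measure ({i : V // i ≠ i₀} → ℝ) :=
  volume.withDensity (fun x => ENNReal.ofReal (QDensity W i₀ x))

section Aux

omit [DecidableEq V] in
lemma aux_treePoly_cont (W : V → V → ℝ) (r : V) : Continuous (treePoly W r) := by
  unfold treePoly
  exact continuous_finset_sum _ fun T _ => continuous_finset_prod _ fun e _ =>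
    continuous_const.mul ((((continuous_apply e.2).sub (continuous_apply e.1)).rexp))

lemma aux_extUp_cont (i₀ : V) : Continuous (extUp i₀ : _ → V → ℝ) := by
  unfold extUp
  refine continuous_pi fun i => ?_
  by_cases h : i = i₀
  · simp only [h, dif_pos]; exact continuous_const
  · simp only [dif_neg h]; exact continuous_apply _

lemma aux_QDensity_cont (W : V → V → ℝ) (i₀ : V) : Continuous (QDensity W i₀) := by
  unfold QDensity
  have h := aux_extUp_cont (V := V) i₀
  refine (continuous_const.mul (Real.continuous_exp.comp ?_)).mul
    (Real.continuous_sqrt.comp ((aux_treePoly_cont W i₀).comp h))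
  exact continuous_const.mul (continuous_finset_sum _ fun p _ =>
    continuous_const.mul ((Real.continuous_exp.comp
      (((continuous_apply p.2).comp h).sub ((continuous_apply p.1).comp h))).sub continuous_const))

omit [DecidableEq V] in
lemma aux_treePoly_nonneg (W : V → V → ℝ) (hW : ∀ i j, 0 ≤ W i j) (r : V) (u : V → ℝ) :
    0 ≤ treePoly W r u :=
  Finset.sum_nonneg fun _ _ => Finset.prod_nonneg fun _ _ =>
    mul_nonneg (hW _ _) (Real.exp_nonneg _)

omit [DecidableEq V] in
lemma aux_treePoly_eq_zero_iff (W : V → V → ℝ) (hW : ∀ i j, 0 ≤ W i j) (r : V) (u : V → ℝ) :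
    treePoly W r u = 0 ↔
      ∀ T ∈ Finset.univ.filter (fun T : Finset (V × V) => IsDirSpanningTree T r),
        ∃ e ∈ T, W e.1 e.2 = 0 := by
  rw [treePoly, Finset.sum_eq_zero_iff_of_nonneg (fun T _ => Finset.prod_nonneg fun e _ =>
    mul_nonneg (hW _ _) (Real.exp_nonneg _))]
  refine forall₂_congr fun T _ => ?_
  rw [Finset.prod_eq_zero_iff]
  refine exists_congr fun e => and_congr_right fun _ => ?_
  constructor
  · intro h
    rcases mul_eq_zero.1 h with h | h
    · exact h
    · exact absurd h (Real.exp_ne_zero _)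
  · intro h; rw [h, zero_mul]

lemma aux_const_pos : ∀ n : ℕ, (0:ℝ) < ((Real.sqrt (2 * Real.pi)) ^ n)⁻¹ := fun n =>
  inv_pos.2 (pow_pos (Real.sqrt_pos.2 (by positivity)) n)

lemma aux_QDensity_nonneg (W : V → V → ℝ) (i₀ : V) (x : {i : V // i ≠ i₀} → ℝ) :
    0 ≤ QDensity W i₀ x :=
  mul_nonneg (mul_nonneg (aux_const_pos _).le (Real.exp_nonneg _)) (Real.sqrt_nonneg _)

lemma aux_QDensity_eq_zero_iff (W : V → V → ℝ) (hW : ∀ i j, 0 ≤ W i j) (i₀ : V)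
    (x : {i : V // i ≠ i₀} → ℝ) :
    QDensity W i₀ x = 0 ↔ treePoly W i₀ (extUp i₀ x) = 0 := by
  unfold QDensity
  rw [mul_eq_zero, mul_eq_zero]
  constructor
  · rintro ((h | h) | h)
    · exact absurd h (ne_of_gt (aux_const_pos _))
    · exact absurd h (Real.exp_ne_zero _)
    · exact le_antisymm (Real.sqrt_eq_zero'.1 h) (aux_treePoly_nonneg W hW i₀ _)
  · intro h; right; rw [h, Real.sqrt_zero]

lemma aux_ratio (c a b s du dv : ℝ) (hc : 0 < c) (hdu : 0 ≤ du) (hdv : 0 < dv)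
    (hab : a - b = s) :
    (c * Real.exp a * Real.sqrt du) / (c * Real.exp b * Real.sqrt dv)
      = Real.exp s * Real.sqrt (du / dv) := by
  rw [Real.sqrt_div hdu, ← hab, Real.exp_sub]
  have h1 : Real.sqrt dv ≠ 0 := ne_of_gt (Real.sqrt_pos.2 hdv)
  have h2 : Real.exp b ≠ 0 := Real.exp_ne_zero b
  field_simp

end Aux

set_option maxHeartbeats 1000000 in
theorem stmt_16 (W : V → V → ℝ) (hsym : ∀ i j, W i j = W j i) (hW : ∀ i j, 0 ≤ W i j)
    (i₀ : V)
    (hprob : ∀ j₁ : V, ∫ x : {i : V // i ≠ j₁} → ℝ, QDensity W j₁ x = 1)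
    (v : V → ℝ) (hv : v i₀ = 0) (γ : ℝ)
    (Qγ : Measure ({i : V // i ≠ i₀} → ℝ))
    (hQγ : Qγ = Measure.map (fun x => fun i => x i - γ * v i.val) (Qmeasure W i₀)) :
    Qmeasure W i₀ ≪ Qγ ∧
    (Qmeasure W i₀).rnDeriv Qγ =ᵐ[Qγ] fun x =>
      ENNReal.ofReal
        (Real.exp ((1/2) * ∑ p ∈ Finset.univ.filter (fun p : V × V => p.1 ≠ p.2),
            W p.1 p.2 * Real.exp (extUp i₀ x p.2 - extUp i₀ x p.1) *
              (Real.exp (γ * (v p.2 - v p.1)) - 1)) *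
         Real.sqrt (treePoly W i₀ (extUp i₀ x) /
            treePoly W i₀ (fun i => extUp i₀ x i + γ * v i))) := by
  classical
  set S : ({i : V // i ≠ i₀} → ℝ) → ({i : V // i ≠ i₀} → ℝ) :=
    fun x => fun i => x i + γ * v i.val with hS
  set T : ({i : V // i ≠ i₀} → ℝ) → ({i : V // i ≠ i₀} → ℝ) :=
    fun x => fun i => x i - γ * v i.val with hT
  have hTmeas : Measurable T :=
    measurable_pi_lambda _ fun i => (measurable_pi_apply i).sub measurable_const
  have hST : ∀ x, S (T x) = x := by
    intro x; funext i; simp [hS, hT]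
  set f : ({i : V // i ≠ i₀} → ℝ) → ℝ≥0∞ :=
    fun x => ENNReal.ofReal (QDensity W i₀ x) with hf
  set g : ({i : V // i ≠ i₀} → ℝ) → ℝ≥0∞ :=
    fun x => ENNReal.ofReal (QDensity W i₀ (S x)) with hg
  have hSmeas : Measurable S :=
    measurable_pi_lambda _ fun i => (measurable_pi_apply i).add measurable_const
  have hfmeas : Measurable f := ((aux_QDensity_cont W i₀).measurable).ennreal_ofReal
  have hgmeas : Measurable g :=
    (((aux_QDensity_cont W i₀).measurable).comp hSmeas).ennreal_ofReal
  have hext : ∀ x, extUp i₀ (S x) = fun j => extUp i₀ x j + γ * v j := by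
    intro x; funext j
    by_cases h : j = i₀
    · simp [extUp, h, hv]
    · simp [extUp, h, hS]
  have hQγ' : Qγ = volume.withDensity g := by
    rw [hQγ, Qmeasure]
    ext s hs
    rw [Measure.map_apply hTmeas hs, withDensity_apply _ (hTmeas hs), withDensity_apply _ hs]
    have hvol : Measure.map T (volume : Measure ({i : V // i ≠ i₀} → ℝ)) = volume := by
      have hTe : T = (· + (-(fun i : {i : V // i ≠ i₀} => γ * v i.val))) := by
        funext x; funext i; simp [hT, sub_eq_add_neg]
      rw [hTe, map_add_right_eq_self]
    calc ∫⁻ x in T ⁻¹' s, f x ∂volume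
        = ∫⁻ x in T ⁻¹' s, g (T x) ∂volume := by
          refine setLIntegral_congr_fun (hTmeas hs) (fun x _ => ?_)
          simp only [hf, hg, hST]
      _ = ∫⁻ y in s, g y ∂(Measure.map T volume) := (setLIntegral_map hs hgmeas hTmeas).symm
      _ = ∫⁻ y in s, g y ∂volume := by rw [hvol]
  have hzero : ∀ x, g x = 0 → f x = 0 := by
    intro x hx
    have h1 : QDensity W i₀ (S x) = 0 :=
      le_antisymm (ENNReal.ofReal_eq_zero.1 hx) (aux_QDensity_nonneg W i₀ _)
    have h2 := (aux_QDensity_eq_zero_iff W hW i₀ (S x)).1 h1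
    rw [aux_treePoly_eq_zero_iff W hW] at h2
    have h3 : treePoly W i₀ (extUp i₀ x) = 0 := (aux_treePoly_eq_zero_iff W hW i₀ _).2 h2
    simp [hf, (aux_QDensity_eq_zero_iff W hW i₀ x).2 h3]
  set h : ({i : V // i ≠ i₀} → ℝ) → ℝ≥0∞ := fun x => f x / g x with hh
  have hhmeas : Measurable h := hfmeas.div hgmeas
  have hgh : (fun x => g x * h x) = f := by
    funext x
    by_cases hx : g x = 0
    · rw [hh]; simp only [hx, zero_mul]; exact (hzero x hx).symm
    · rw [hh, mul_comm, ENNReal.div_mul_cancel hx ENNReal.ofReal_ne_top]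
  have hQ : Qmeasure W i₀ = Qγ.withDensity h := by
    rw [hQγ', ← withDensity_mul _ hgmeas hhmeas, Qmeasure, ← hf]
    congr 1
    funext x
    rw [Pi.mul_apply]
    exact (congrFun hgh x).symm
  have hsf : SigmaFinite Qγ := by
    rw [hQγ']; exact SigmaFinite.withDensity_ofReal _
  refine ⟨by rw [hQ]; exact withDensity_absolutelyContinuous _ _, ?_⟩
  have hrn : (Qmeasure W i₀).rnDeriv Qγ =ᵐ[Qγ] h := by
    rw [hQ]; exact Measure.rnDeriv_withDensity Qγ hhmeas
  refine hrn.trans ?_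
  have hgne : ∀ᵐ x ∂Qγ, g x ≠ 0 := by
    rw [hQγ', ae_iff]
    have hms : MeasurableSet {x | ¬ g x ≠ 0} := by
      simp only [not_not]
      exact hgmeas (measurableSet_singleton 0)
    rw [withDensity_apply _ hms]
    calc ∫⁻ x in {x | ¬ g x ≠ 0}, g x ∂volume
        = ∫⁻ _ in {x | ¬ g x ≠ 0}, 0 ∂volume := by
          refine setLIntegral_congr_fun hms (fun x hx => ?_)
          simpa using hx
      _ = 0 := by simp
  filter_upwards [hgne] with x hx
  have hQDS : 0 < QDensity W i₀ (S x) := by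
    rcases lt_or_eq_of_le (aux_QDensity_nonneg W i₀ (S x)) with hp | hp
    · exact hp
    · exact absurd (by simp [hg, ← hp]) hx
  have hofdiv : h x = ENNReal.ofReal (QDensity W i₀ x / QDensity W i₀ (S x)) := by
    rw [hh, ENNReal.ofReal_div_of_pos hQDS]
  rw [hofdiv]
  congr 1
  have hDv : 0 < treePoly W i₀ (fun j => extUp i₀ x j + γ * v j) := by
    rcases lt_or_eq_of_le (aux_treePoly_nonneg W hW i₀ _) with hp | hp
    · exact hp
    · exfalso
      have h0 : QDensity W i₀ (S x) = 0 := by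
        rw [aux_QDensity_eq_zero_iff W hW, hext x, ← hp]
      exact absurd h0 (ne_of_gt hQDS)
  have hDu : 0 ≤ treePoly W i₀ (extUp i₀ x) := aux_treePoly_nonneg W hW i₀ _
  simp only [QDensity, hext x]
  refine aux_ratio _ _ _ _ _ _ (aux_const_pos _) hDu hDv ?_
  have hsum : (∑ p ∈ Finset.univ.filter (fun p : V × V => p.1 ≠ p.2),
        W p.1 p.2 * (Real.exp ((extUp i₀ x p.2 + γ * v p.2) -
          (extUp i₀ x p.1 + γ * v p.1)) - 1))
      - (∑ p ∈ Finset.univ.filter (fun p : V × V => p.1 ≠ p.2),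
        W p.1 p.2 * (Real.exp (extUp i₀ x p.2 - extUp i₀ x p.1) - 1))
      = ∑ p ∈ Finset.univ.filter (fun p : V × V => p.1 ≠ p.2),
        W p.1 p.2 * Real.exp (extUp i₀ x p.2 - extUp i₀ x p.1) *
          (Real.exp (γ * (v p.2 - v p.1)) - 1) := by
    rw [← Finset.sum_sub_distrib]
    refine Finset.sum_congr rfl fun p _ => ?_
    have he : (extUp i₀ x p.2 + γ * v p.2) - (extUp i₀ x p.1 + γ * v p.1)
        = (extUp i₀ x p.2 - extUp i₀ x p.1) + γ * (v p.2 - v p.1) := by ring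
    rw [he, Real.exp_add]
    ring
  linarith [hsum]
end
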